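/- For every real h, the function α(h) = h ψ(h)/(2 Ψ(h)) − log Ψ(h) is nonnegative, where ψ and Ψ are the standard Gaussian density and CDF respectively. -/

import Mathlib

open MeasureTheory ProbabilityTheory Real

/-- Gaussian density N(z; m, s²). -/
noncomputable def gauss (m s2 z : ℝ) : ℝ :=
  (Real.sqrt (2 * Real.pi * s2))⁻¹ * Real.exp (-(z - m) ^ 2 / (2 * s2))

/-- Standard Gaussian density ψ. -/
noncomputable def stdPdf (t : ℝ) : ℝ := gauss 0 1 t

/-- Standard Gaussian CDF Ψ. -/
noncomputable def stdCdf (t : ℝ) : ℝ := ∫ u in Set.Iic t, stdPdf u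

open Filter Set Topology

lemma stdPdf_eq : stdPdf = fun t : ℝ => (Real.sqrt (2 * π))⁻¹ * Real.exp (-t ^ 2 / 2) := by
  funext t; simp [stdPdf, gauss]

lemma stdPdf_eq_gaussian : stdPdf = gaussianPDFReal 0 1 := by
  funext t; simp [stdPdf, gauss, gaussianPDFReal]

lemma stdPdf_pos (t : ℝ) : 0 < stdPdf t := by
  rw [stdPdf_eq]; positivity

lemma stdPdf_integrable : Integrable stdPdf := by
  rw [stdPdf_eq_gaussian]; exact integrable_gaussianPDFReal 0 1

lemma stdPdf_total : ∫ u, stdPdf u = 1 := by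
  rw [stdPdf_eq_gaussian]; exact integral_gaussianPDFReal_eq_one 0 one_ne_zero

lemma stdPdf_le (t : ℝ) : stdPdf t ≤ (Real.sqrt (2 * π))⁻¹ := by
  rw [stdPdf_eq]
  have h1 : Real.exp (-t ^ 2 / 2) ≤ 1 := by
    rw [Real.exp_le_one_iff]; nlinarith [sq_nonneg t]
  have h2 : (0:ℝ) < (Real.sqrt (2 * π))⁻¹ := by positivity
  nlinarith

lemma hasDerivAt_stdPdf (x : ℝ) : HasDerivAt stdPdf (-x * stdPdf x) x := by
  have h1 : HasDerivAt (fun u : ℝ => -u ^ 2 / 2) (-x) x := by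
    have := ((hasDerivAt_pow 2 x).neg).div_const 2
    refine this.congr_deriv ?_; norm_num; ring
  have h2 := h1.exp
  have h3 := h2.const_mul ((Real.sqrt (2 * π))⁻¹)
  rw [stdPdf_eq]
  refine h3.congr_deriv ?_
  simp only [neg_mul]; ring

lemma stdPdf_continuous : Continuous stdPdf := by
  rw [stdPdf_eq]
  continuity

lemma stdPdf_tendsto_atBot : Tendsto stdPdf atBot (𝓝 0) := by
  rw [stdPdf_eq]
  have h1 : Tendsto (fun u : ℝ => -u ^ 2 / 2) atBot atBot := by
    have h2 : Tendsto (fun u : ℝ => u ^ 2) atBot atTop := by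
      have h5 : Tendsto (fun u : ℝ => (-u) * (-u)) atBot atTop :=
        tendsto_mul_self_atTop.comp tendsto_neg_atBot_atTop
      have h6 : (fun u : ℝ => (-u) * (-u)) = fun u : ℝ => u ^ 2 := by
        funext u; ring
      rwa [h6] at h5
    have h3 : Tendsto (fun u : ℝ => u ^ 2 / 2) atBot atTop := h2.atTop_div_const (by norm_num)
    have h4 := tendsto_neg_atTop_atBot.comp h3
    have h5 : (Neg.neg ∘ fun u : ℝ => u ^ 2 / 2) = fun u : ℝ => -u ^ 2 / 2 := by
      funext u; simp [neg_div]
    rwa [h5] at h4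
  have := Real.tendsto_exp_atBot.comp h1
  have h4 := this.const_mul ((Real.sqrt (2 * π))⁻¹)
  simpa using h4

/-- FTC lower Mills: stdCdf h ≥ -h * φ h / (1+h²). -/
lemma mills_lower (h : ℝ) : -h * stdPdf h / (1 + h ^ 2) ≤ stdCdf h := by
  set G : ℝ → ℝ := fun u => -u * stdPdf u / (1 + u ^ 2) with hG
  set G' : ℝ → ℝ := fun u => stdPdf u * (1 - 2 / (1 + u ^ 2) ^ 2) with hG'
  have hderiv : ∀ x : ℝ, HasDerivAt G (G' x) x := by
    intro x
    have hden : (1 : ℝ) + x ^ 2 ≠ 0 := by positivity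
    have h1 : HasDerivAt (fun u : ℝ => -u * stdPdf u)
        (-1 * stdPdf x + -x * (-x * stdPdf x)) x :=
      ((hasDerivAt_id x).neg.mul (hasDerivAt_stdPdf x))
    have h2 : HasDerivAt (fun u : ℝ => 1 + u ^ 2) (2 * x) x := by
      have := (hasDerivAt_pow 2 x).const_add 1
      refine this.congr_deriv ?_; norm_num
    have h3 := h1.div h2 hden
    refine h3.congr_deriv ?_
    simp only [hG']
    field_simp
    ring
  have hbd : ∀ u : ℝ, |G' u| ≤ stdPdf u := by
    intro u
    have h0 : (1:ℝ) ≤ (1 + u ^ 2) ^ 2 := by nlinarith [sq_nonneg u]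
    have h1 : 0 < (1 + u ^ 2) ^ 2 := by positivity
    have h2 : 0 ≤ 2 / (1 + u ^ 2) ^ 2 := by positivity
    have h3 : 2 / (1 + u ^ 2) ^ 2 ≤ 2 := by
      rw [div_le_iff₀ h1]; nlinarith
    have := stdPdf_pos u
    rw [abs_mul, abs_of_pos this]
    have : |1 - 2 / (1 + u ^ 2) ^ 2| ≤ 1 := by
      rw [abs_le]; constructor <;> nlinarith
    nlinarith [stdPdf_pos u]
  have hint : IntegrableOn G' (Iic h) := by
    apply (stdPdf_integrable.restrict (s := Iic h)).mono
    · have hc2 : Continuous fun u : ℝ => 1 - 2 / (1 + u ^ 2) ^ 2 :=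
        continuous_const.sub (continuous_const.div
          ((continuous_const.add (continuous_pow 2)).pow 2) (fun u => by positivity))
      exact ((stdPdf_continuous.mul hc2).aestronglyMeasurable).restrict
    · refine Eventually.of_forall fun u => ?_
      rw [Real.norm_eq_abs, Real.norm_eq_abs, abs_of_pos (stdPdf_pos u)]
      exact hbd u
  have htend : Tendsto G atBot (𝓝 0) := by
    apply squeeze_zero_norm _ stdPdf_tendsto_atBot
    intro u
    have h1 : 0 < 1 + u ^ 2 := by positivity
    rw [Real.norm_eq_abs, hG]
    simp only []
    rw [abs_div, abs_of_pos h1, div_le_iff₀ h1, abs_mul, abs_neg,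
      abs_of_pos (stdPdf_pos u)]
    nlinarith [abs_nonneg u, stdPdf_pos u, sq_abs u, sq_nonneg (|u| - 1)]
  have key : ∫ u in Iic h, G' u = G h - 0 :=
    integral_Iic_of_hasDerivAt_of_tendsto' (fun x _ => hderiv x) hint htend
  have hmono : ∫ u in Iic h, G' u ≤ ∫ u in Iic h, stdPdf u := by
    apply setIntegral_mono_on hint (stdPdf_integrable.integrableOn) measurableSet_Iic
    intro u _
    have h1 : 0 ≤ 2 / (1 + u ^ 2) ^ 2 := by positivity
    simp only [hG']
    nlinarith [stdPdf_pos u]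
  rw [key, sub_zero] at hmono
  exact hmono

/-- FTC upper Mills for h < 0 : stdCdf h ≤ stdPdf h / (-h). -/
lemma mills_upper {h : ℝ} (hh : h < 0) : stdCdf h ≤ -stdPdf h / h := by
  set H : ℝ → ℝ := fun u => -stdPdf u / u with hH
  set H' : ℝ → ℝ := fun u => stdPdf u * (1 + (u ^ 2)⁻¹) with hH'
  have hderiv : ∀ x : ℝ, x ≠ 0 → HasDerivAt H (H' x) x := by
    intro x hx
    have h1 : HasDerivAt (fun u : ℝ => -stdPdf u) (-(-x * stdPdf x)) x :=
      (hasDerivAt_stdPdf x).neg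
    have h3 := h1.div (hasDerivAt_id x) hx
    refine h3.congr_deriv ?_
    simp only [hH', id]
    field_simp
    ring
  have hint : IntegrableOn H' (Iic h) := by
    apply ((stdPdf_integrable.const_mul (1 + (h ^ 2)⁻¹)).restrict (s := Iic h)).mono
    · have hm : Measurable fun u : ℝ => stdPdf u * (1 + (u ^ 2)⁻¹) :=
        stdPdf_continuous.measurable.mul
          (measurable_const.add ((measurable_id.pow_const 2).inv))
      exact hm.aestronglyMeasurable.restrict
    · rw [ae_restrict_iff' measurableSet_Iic]
      refine Eventually.of_forall fun u hu => ?_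
      have hu0 : u ≤ h := hu
      have hune : u < 0 := lt_of_le_of_lt hu0 hh
      have h2 : h ^ 2 ≤ u ^ 2 := by nlinarith
      have h3 : (u ^ 2)⁻¹ ≤ (h ^ 2)⁻¹ := by
        apply inv_anti₀ (by nlinarith) h2
      have hp := stdPdf_pos u
      rw [Real.norm_eq_abs, Real.norm_eq_abs, hH']
      simp only []
      rw [abs_of_pos (by positivity), abs_of_pos (by positivity)]
      nlinarith
  have htend : Tendsto H atBot (𝓝 0) := by
    have h1 : Tendsto (fun u : ℝ => -stdPdf u) atBot (𝓝 (-0)) := stdPdf_tendsto_atBot.neg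
    have h2 : Tendsto (fun u : ℝ => u⁻¹) atBot (𝓝 0) := by
      have h2b : Tendsto (fun u : ℝ => (-u)⁻¹) atBot (𝓝 0) :=
        tendsto_inv_atTop_zero.comp tendsto_neg_atBot_atTop
      have h2a := h2b.neg
      try rw [neg_zero] at h2a
      apply h2a.congr
      intro u
      rw [inv_neg, neg_neg]
    have h3 := h1.mul h2
    simpa [hH, div_eq_mul_inv] using h3
  have hcont : ContinuousWithinAt H (Iic h) h := by
    exact ((hderiv h hh.ne).continuousAt).continuousWithinAt
  have key : ∫ u in Iic h, H' u = H h - 0 := by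
    apply integral_Iic_of_hasDerivAt_of_tendsto hcont _ hint htend
    intro x hx
    exact hderiv x (ne_of_lt (lt_trans hx hh))
  have hmono : ∫ u in Iic h, stdPdf u ≤ ∫ u in Iic h, H' u := by
    apply setIntegral_mono_on stdPdf_integrable.integrableOn hint measurableSet_Iic
    intro u _
    have h1 : 0 ≤ (u ^ 2)⁻¹ := by positivity
    simp only [hH']
    nlinarith [stdPdf_pos u]
  rw [key, sub_zero] at hmono
  exact hmono

lemma stdCdf_pos (h : ℝ) : 0 < stdCdf h := by
  rw [stdCdf]
  rw [setIntegral_pos_iff_support_of_nonneg_ae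
    (Eventually.of_forall fun u => (stdPdf_pos u).le) stdPdf_integrable.integrableOn]
  have : Function.support stdPdf ∩ Iic h = Iic h := by
    apply inter_eq_self_of_subset_right
    intro x _
    exact (stdPdf_pos x).ne'
  rw [this, Real.volume_Iic]
  simp

lemma stdCdf_le_one (h : ℝ) : stdCdf h ≤ 1 := by
  rw [stdCdf, ← stdPdf_total]
  exact setIntegral_le_integral stdPdf_integrable
    (Eventually.of_forall fun u => (stdPdf_pos u).le)

lemma stdCdf_zero : stdCdf 0 = 1 / 2 := by
  have hsym : ∫ u in Iic (0:ℝ), stdPdf u = ∫ u in Ioi (0:ℝ), stdPdf u := by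
    have h0 := integral_comp_neg_Iic 0 stdPdf
    simp only [neg_zero] at h0
    rw [← h0]
    congr 1
    funext u
    rw [stdPdf_eq]
    simp
  have hsplit : (∫ u in Iic (0:ℝ), stdPdf u) + ∫ u in Ioi (0:ℝ), stdPdf u = 1 := by
    rw [← stdPdf_total]
    have := integral_add_compl (measurableSet_Iic (a := (0:ℝ))) stdPdf_integrable
    rw [compl_Iic] at this
    exact this
  rw [stdCdf]
  linarith [hsym, hsplit]

lemma stdCdf_mono_sub {a : ℝ} (ha : a ≤ 0) :
    stdCdf 0 - stdCdf a ≤ -a * (Real.sqrt (2 * π))⁻¹ ∧ stdCdf a ≤ stdCdf 0 := by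
  have hIoc : stdCdf 0 - stdCdf a = ∫ u in Ioc a 0, stdPdf u := by
    rw [stdCdf, stdCdf]
    rw [intervalIntegral.integral_Iic_sub_Iic stdPdf_integrable.integrableOn
      stdPdf_integrable.integrableOn, intervalIntegral.integral_of_le ha]
  constructor
  · rw [hIoc]
    have hb : ∫ u in Ioc a 0, stdPdf u ≤ ∫ u in Ioc a 0, (Real.sqrt (2 * π))⁻¹ := by
      apply setIntegral_mono_on stdPdf_integrable.integrableOn
        (integrableOn_const (by rw [Real.volume_Ioc]; exact ENNReal.ofReal_ne_top))
        measurableSet_Ioc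
      intro u _
      exact stdPdf_le u
    have hc : ∫ u in Ioc a 0, (Real.sqrt (2 * π))⁻¹ = (0 - a) * (Real.sqrt (2 * π))⁻¹ := by
      rw [setIntegral_const, measureReal_def, Real.volume_Ioc, ENNReal.toReal_ofReal (by linarith)]
      simp
    rw [hc] at hb
    simpa using hb
  · have : 0 ≤ ∫ u in Ioc a 0, stdPdf u :=
      setIntegral_nonneg measurableSet_Ioc fun u _ => (stdPdf_pos u).le
    linarith [hIoc]

lemma sqrt_two_pi_ge : (2.5 : ℝ) ≤ Real.sqrt (2 * π) := by
  rw [Real.le_sqrt (by norm_num) (by positivity)]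
  nlinarith [Real.pi_gt_d6]

lemma exp_half_lt : Real.exp (1 / 2) < 1.649 := by
  have h1 : Real.exp (1 / 2) * Real.exp (1 / 2) = Real.exp 1 := by
    rw [← Real.exp_add]; norm_num
  nlinarith [Real.exp_one_lt_d9, Real.exp_pos (1 / 2 : ℝ)]

theorem stmt_9 (h : ℝ) :
    0 ≤ h * stdPdf h / (2 * stdCdf h) - Real.log (stdCdf h) := by
  have hΦpos := stdCdf_pos h
  have hφ := stdPdf_pos h
  . rcases le_or_gt 0 h with hpos | hneg
    · have h1 : 0 ≤ h * stdPdf h / (2 * stdCdf h) := by positivity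
      have h2 : Real.log (stdCdf h) ≤ 0 :=
        Real.log_nonpos (le_of_lt hΦpos) (stdCdf_le_one h)
      linarith
    rcases le_or_gt h (-0.66) with hc | hc
    · -- far tail
      have hml := mills_lower h
      have hmu := mills_upper hneg
      have hnum : (0:ℝ) < -h := by linarith
      have hlog1 : Real.log (stdCdf h) ≤ Real.log (stdPdf h / (-h)) := by
        have heq : -stdPdf h / h = stdPdf h / (-h) := by
          rw [div_neg, neg_div]
        rw [← heq]
        exact Real.log_le_log hΦpos hmu
      have hlog2 : Real.log (stdPdf h / (-h)) = Real.log (stdPdf h) - Real.log (-h) :=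
        Real.log_div hφ.ne' hnum.ne'
      have hlogφ : Real.log (stdPdf h) = -Real.log (Real.sqrt (2 * π)) - h ^ 2 / 2 := by
        rw [stdPdf_eq]
        simp only []
        rw [Real.log_mul (by positivity) (Real.exp_ne_zero _), Real.log_inv, Real.log_exp]
        ring
      have hkey : (1:ℝ) / 2 ≤ Real.log (Real.sqrt (2 * π)) + Real.log (-h) := by
        rw [← Real.log_mul (by positivity) hnum.ne']
        rw [Real.le_log_iff_exp_le (by positivity)]
        have h1 := exp_half_lt
        have h2 := sqrt_two_pi_ge
        nlinarith [Real.sqrt_nonneg (2 * π)]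
      have hfrac : -(1 + h ^ 2) / 2 ≤ h * stdPdf h / (2 * stdCdf h) := by
        have hlb : 0 < -h * stdPdf h / (1 + h ^ 2) := by positivity
        have hd : -h * stdPdf h / (2 * stdCdf h)
            ≤ -h * stdPdf h / (2 * (-h * stdPdf h / (1 + h ^ 2))) :=
          div_le_div_of_nonneg_left (by positivity) (by positivity) (by linarith)
        have heq2 : -h * stdPdf h / (2 * (-h * stdPdf h / (1 + h ^ 2))) = (1 + h ^ 2) / 2 := by
          field_simp [hneg.ne, hφ.ne']
        have heq3 : h * stdPdf h / (2 * stdCdf h) = -(-h * stdPdf h / (2 * stdCdf h)) := by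
          ring
        rw [heq3]
        rw [heq2] at hd
        linarith
      have hlogb : Real.log (stdCdf h) ≤ -(1 + h ^ 2) / 2 := by
        rw [hlog2, hlogφ] at hlog1
        linarith
      linarith
    · -- near zero
      have hc4 : (Real.sqrt (2 * π))⁻¹ ≤ 0.4 := by
        have := sqrt_two_pi_ge
        have h1 : ((2.5:ℝ))⁻¹ = 0.4 := by norm_num
        calc (Real.sqrt (2 * π))⁻¹ ≤ ((2.5:ℝ))⁻¹ := inv_anti₀ (by norm_num) this
        _ = 0.4 := h1
      have hcpos : (0:ℝ) < (Real.sqrt (2 * π))⁻¹ := by positivity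
      have hφc := stdPdf_le h
      obtain ⟨hsub, hmono⟩ := stdCdf_mono_sub (le_of_lt hneg)
      rw [stdCdf_zero] at hsub hmono
      have hlog : Real.log (stdCdf h) ≤ stdCdf h - 1 := Real.log_le_sub_one_of_pos hΦpos
      have hkey2 : stdCdf h - 1 ≤ h * stdPdf h / (2 * stdCdf h) := by
        rw [le_div_iff₀ (by positivity)]
        set c := (Real.sqrt (2 * π))⁻¹
        set Φ := stdCdf h
        have t1 : 0 ≤ Φ - (1 / 2 + h * c) := by linarith
        have t2 : 0 ≤ (1 / 2 - h * c) - Φ := by nlinarith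
        have t3 : -h * stdPdf h ≤ -h * c :=
          mul_le_mul_of_nonneg_left hφc (by linarith)
        nlinarith [mul_nonneg t1 t2, mul_nonneg (by linarith : (0:ℝ) ≤ 0.66 + h) hcpos.le,
          mul_nonneg (by linarith : (0:ℝ) ≤ 0.4 - c) (by linarith : (0:ℝ) ≤ -h),
          sq_nonneg (h * c), hcpos.le]
      linarith
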